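/- Suppose z₁ = (ρ, 0, m) with |ρ| ≤ 1, and z = (ρ+ε, v, m̃) with v ≠ 0 and z − z₁ ∈ Λ. Then ε ≠ 0, and: if 0 < ε ≤ 1−ρ then |v|² + (ρ+ε+1)v₂ ≤ 0 and v₂ < 0; if −1−ρ ≤ ε < 0 then |v|² + (ρ+ε−1)v₂ ≤ 0 and v₂ > 0. -/
import Mathlib


open MeasureTheory

noncomputable section

/-- Euclidean dot product on ℝ². -/
def dot (a b : ℝ × ℝ) : ℝ := a.1 * b.1 + a.2 * b.2

/-- Rotation by 90°: (a,b)⊥ = (−b, a). -/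
def perp (a : ℝ × ℝ) : ℝ × ℝ := (-a.2, a.1)

/-- Euclidean norm on ℝ². -/
def nrm (a : ℝ × ℝ) : ℝ := Real.sqrt (a.1 ^ 2 + a.2 ^ 2)

/-- State space ℝ × ℝ² × ℝ² of (ρ, v, m). -/
abbrev Pt := ℝ × (ℝ × ℝ) × (ℝ × ℝ)

/-- The wave cone Λ of stationary IPM. -/
def Lam : Set Pt :=
  {z | dot z.2.1 z.2.1 + z.1 * z.2.1.2 = 0 ∧ dot z.2.2 (perp z.2.1) = 0 ∧
       dot z.2.2 (z.2.1 + (0, z.1)) = 0}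

/-- The constitutive set K. -/
def Kset : Set Pt := {z | |z.1| = 1 ∧ z.2.2 = z.1 • z.2.1}

def G2 (z : Pt) : ℝ := dot z.2.2 (perp z.2.1)

def G3 (z : Pt) : ℝ :=
  -dot (z.2.1 - z.2.2) (z.2.1 + (0, 1 + z.1)) + dot (z.2.1 - z.2.2) (z.2.1 - z.2.2) / 2

def G4 (z : Pt) : ℝ :=
  -dot (z.2.1 + z.2.2) (z.2.1 - (0, 1 - z.1)) + dot (z.2.1 + z.2.2) (z.2.1 + z.2.2) / 2

theorem stmt18 (ρ ε : ℝ) (v m mt : ℝ × ℝ) (hρ : |ρ| ≤ 1) (hv : v ≠ 0)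
    (hΛ : (((ρ + ε, v, mt) : Pt) - (ρ, 0, m)) ∈ Lam) :
    ε ≠ 0 ∧
    (0 < ε → ε ≤ 1 - ρ → dot v v + (ρ + ε + 1) * v.2 ≤ 0 ∧ v.2 < 0) ∧
    (-1 - ρ ≤ ε → ε < 0 → dot v v + (ρ + ε - 1) * v.2 ≤ 0 ∧ 0 < v.2) := by
  obtain ⟨h1, h2, h3⟩ := hΛ
  simp only [Lam, Set.mem_setOf_eq, dot, Prod.fst_sub, Prod.snd_sub, Prod.fst_zero,
    Prod.snd_zero, sub_zero] at h1 h2 h3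
  have h1' : v.1 * v.1 + v.2 * v.2 + ε * v.2 = 0 := by ring_nf at h1 ⊢; linarith [h1]
  have hvne : v.1 ≠ 0 ∨ v.2 ≠ 0 := by
    by_contra hc; push_neg at hc; exact hv (Prod.ext hc.1 hc.2)
  have hvpos : 0 < v.1 * v.1 + v.2 * v.2 := by
    rcases hvne with h | h <;> nlinarith [sq_nonneg v.1, sq_nonneg v.2, mul_self_pos.mpr h]
  have hεv : ε * v.2 < 0 := by linarith
  have hεne : ε ≠ 0 := by intro h; rw [h] at hεv; simp at hεv
  have habs := abs_le.mp hρ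
  refine ⟨hεne, ?_, ?_⟩
  · intro hε1 hε2
    have hv2 : v.2 < 0 := by nlinarith
    refine ⟨?_, hv2⟩
    have heq : dot v v + (ρ + ε + 1) * v.2 = (ρ + 1) * v.2 + (v.1 * v.1 + v.2 * v.2 + ε * v.2) := by
      simp [dot]; ring
    rw [heq, h1']; nlinarith
  · intro hε1 hε2
    have hv2 : 0 < v.2 := by nlinarith
    refine ⟨?_, hv2⟩
    have heq : dot v v + (ρ + ε - 1) * v.2 = (ρ - 1) * v.2 + (v.1 * v.1 + v.2 * v.2 + ε * v.2) := by
      simp [dot]; ring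
    rw [heq, h1']; nlinarith
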